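/- arXiv:1706.08174 — 2 statements merged into one kernel-verified Lean document; each statement's English description precedes it below -/
import Mathlib

section
/- If κ is an infinite cardinal such that 2^λ < κ for all cardinals λ < cf(κ), then there exists a regular κ-tree. -/
open Cardinal Set

/-- A node of `^{<κ}κ`: a function from an ordinal `len < κ` into the ordinals `< κ`,
normalized to take value `0` at or beyond its length (so that equality of nodes is
extensional). -/
structure SeqNode (κ : Cardinal.{0}) : Type 1 where
  len : Ordinal.{0}
  len_lt : len < κ.ord
  val : Ordinal.{0} → Ordinal.{0}
  val_lt : ∀ β < len, val β < κ.ord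
  val_eq_zero : ∀ β, len ≤ β → val β = 0

namespace SeqNode

variable {κ : Cardinal.{0}}

/-- `s.Init t` means `s ⊑ t`, i.e. `s` is an initial segment of `t`. -/
def Init (s t : SeqNode κ) : Prop :=
  s.len ≤ t.len ∧ ∀ β < s.len, s.val β = t.val β

/-- The restriction `t ↾ β` of `t` to length `min β t.len`. -/
noncomputable def restrict (t : SeqNode κ) (β : Ordinal.{0}) : SeqNode κ where
  len := min β t.len
  len_lt := lt_of_le_of_lt (min_le_right _ _) t.len_lt
  val := fun γ => if γ < min β t.len then t.val γ else 0
  val_lt := fun γ hγ => by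
    try dsimp only
    rw [if_pos hγ]
    exact t.val_lt γ (lt_of_lt_of_le hγ (min_le_right _ _))
  val_eq_zero := fun γ hγ => by
    try dsimp only
    rw [if_neg (not_lt.mpr hγ)]

end SeqNode

/-- The level `T(α)`: nodes of `T` of length `α`. -/
def SeqLevel {κ : Cardinal.{0}} (T : Set (SeqNode κ)) (α : Ordinal.{0}) : Set (SeqNode κ) :=
  {t ∈ T | t.len = α}

/-- A tree: a set of nodes closed under initial segments. -/
def IsSeqTree {κ : Cardinal.{0}} (T : Set (SeqNode κ)) : Prop :=
  ∀ t ∈ T, ∀ s : SeqNode κ, s.Init t → s ∈ T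

/-- A branch of `T`: a subset of `T` linearly ordered by the initial segment relation. -/
def IsBranch {κ : Cardinal.{0}} (T b : Set (SeqNode κ)) : Prop :=
  b ⊆ T ∧ ∀ s ∈ b, ∀ t ∈ b, s.Init t ∨ t.Init s

/-- A maximal branch of `T`. -/
def IsMaximalBranch {κ : Cardinal.{0}} (T b : Set (SeqNode κ)) : Prop :=
  IsBranch T b ∧ ∀ b' : Set (SeqNode κ), IsBranch T b' → b ⊆ b' → b' = b

/-- `T` is perfect: every node has two incomparable extensions in `T`. -/
def IsPerfect {κ : Cardinal.{0}} (T : Set (SeqNode κ)) : Prop :=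
  ∀ t ∈ T, ∃ s ∈ T, ∃ u ∈ T, t.Init s ∧ t.Init u ∧ ¬ s.Init u ∧ ¬ u.Init s

/-- `T ⊆ ^{<κ}κ` is a regular tree of height `η`: it is a tree all of whose nodes
have length `< η`, it has nonempty levels of cardinality `< η.card` at every `α < η`,
every maximal branch meets every level `< η`, and it is perfect. -/
def IsRegularTreeIn (κ : Cardinal.{0}) (η : Ordinal.{0}) (T : Set (SeqNode κ)) : Prop :=
  IsSeqTree T ∧
  (∀ t ∈ T, t.len < η) ∧
  (∀ α < η, (SeqLevel T α).Nonempty) ∧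
  (∀ α < η, Cardinal.mk ↥(SeqLevel T α) < Cardinal.lift.{1} η.card) ∧
  (∀ b : Set (SeqNode κ), IsMaximalBranch T b → ∀ α < η, ∃ t ∈ b, t.len = α) ∧
  IsPerfect T

/-- A regular `κ`-tree. -/
def IsRegularTree (κ : Cardinal.{0}) (T : Set (SeqNode κ)) : Prop :=
  IsRegularTreeIn κ κ.ord T

/-- The truncation `T ∩ ^{<α}κ` of `T` below level `α`. -/
def TreeTrunc {κ : Cardinal.{0}} (T : Set (SeqNode κ)) (α : Ordinal.{0}) : Set (SeqNode κ) :=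
  {t ∈ T | t.len < α}

/-- The level product `⊗_{i<d} X_i`: tuples all of whose entries lie on one common level. -/
def LevelProd {κ : Cardinal.{0}} {d : ℕ} (X : Fin d → Set (SeqNode κ)) :
    Set (Fin d → SeqNode κ) :=
  {x | ∃ α : Ordinal.{0}, ∀ i, x i ∈ X i ∧ (x i).len = α}

/-- `X` dominates `Y`: every element of `Y` has an extension in `X`. -/
def Dominates {κ : Cardinal.{0}} (X Y : Set (SeqNode κ)) : Prop :=
  ∀ y ∈ Y, ∃ x ∈ X, SeqNode.Init y x

/-- `Cone t`: all extensions of `t`. -/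
def Cone {κ : Cardinal.{0}} (t : SeqNode κ) : Set (SeqNode κ) :=
  {s : SeqNode κ | t.Init s}

/-- `X` is a somewhere dense level matrix for trees `T` of height `η`. -/
def IsSDMatrixIn {κ : Cardinal.{0}} (η : Ordinal.{0}) {d : ℕ}
    (T X : Fin d → Set (SeqNode κ)) : Prop :=
  ∃ α β : Ordinal.{0}, α < β ∧ β < η ∧
    ∃ t : Fin d → SeqNode κ,
      (∀ i, t i ∈ SeqLevel (T i) α) ∧
      ∀ i, X i ⊆ SeqLevel (T i) β ∧
        Dominates (X i) (SeqLevel (T i) (α + 1) ∩ Cone (t i))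

/-- `X` is a somewhere dense level matrix for the regular `κ`-trees `T`. -/
def IsSDMatrix (κ : Cardinal.{0}) {d : ℕ} (T X : Fin d → Set (SeqNode κ)) : Prop :=
  IsSDMatrixIn κ.ord T X

/-- The coloring `c` is constant (monochromatic) on the level product of `X`. -/
def MonoOn {κ : Cardinal.{0}} {d : ℕ} (c : (Fin d → SeqNode κ) → Ordinal.{0})
    (X : Fin d → Set (SeqNode κ)) : Prop :=
  ∀ x ∈ LevelProd X, ∀ y ∈ LevelProd X, c x = c y

/-- The somewhere dense Halpern–Läuchli theorem `SDHL(d,σ,κ)`. -/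
def SDHL (d : ℕ) (σ κ : Cardinal.{0}) : Prop :=
  ∀ T : Fin d → Set (SeqNode κ), (∀ i, IsRegularTree κ (T i)) →
    ∀ c : (Fin d → SeqNode κ) → Ordinal.{0},
      (∀ x ∈ LevelProd T, c x < σ.ord) →
      ∃ X : Fin d → Set (SeqNode κ), (∀ i, X i ⊆ T i) ∧
        IsSDMatrix κ T X ∧ MonoOn c X

/-- `s` is an immediate successor of `t`. -/
def IsImmediateSucc {κ : Cardinal.{0}} (t s : SeqNode κ) : Prop :=
  t.Init s ∧ s.len = t.len + 1

/-- `A` is a cofinal subset of (the ordinals below) `η`. -/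
def CofinalIn (A : Set Ordinal.{0}) (η : Ordinal.{0}) : Prop :=
  A ⊆ Set.Iio η ∧ ∀ β < η, ∃ α ∈ A, β ≤ α

/-- `T'` is a strong subtree of the regular `κ`-tree `T` witnessed by the cofinal set
`A ⊆ κ` of splitting levels. -/
def IsStrongSubtree (κ : Cardinal.{0}) (T' T : Set (SeqNode κ)) (A : Set Ordinal.{0}) : Prop :=
  T' ⊆ T ∧ IsRegularTree κ T' ∧ CofinalIn A κ.ord ∧
    ∀ t ∈ T',
      (t.len ∈ A → ∀ s ∈ T, IsImmediateSucc t s → s ∈ T') ∧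
      (t.len ∉ A → ∃! s : SeqNode κ, s ∈ T' ∧ IsImmediateSucc t s)

/-- The strong tree Halpern–Läuchli theorem `HL(d,σ,κ)`. -/
def HL (d : ℕ) (σ κ : Cardinal.{0}) : Prop :=
  ∀ T : Fin d → Set (SeqNode κ), (∀ i, IsRegularTree κ (T i)) →
    ∀ c : (Fin d → SeqNode κ) → Ordinal.{0},
      (∀ x ∈ LevelProd T, c x < σ.ord) →
      ∃ T' : Fin d → Set (SeqNode κ), ∃ A : Set Ordinal.{0},
        (∀ i, IsStrongSubtree κ (T' i) (T i) A) ∧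
        ∀ x : Fin d → SeqNode κ, (∃ α ∈ A, ∀ i, x i ∈ SeqLevel (T' i) α) →
          ∀ y : Fin d → SeqNode κ, (∃ α ∈ A, ∀ i, y i ∈ SeqLevel (T' i) α) →
            c x = c y

/-- `e` is the increasing enumeration (along the ordinals below `η`) of `A`. -/
def IsIncreasingEnum (e : Ordinal.{0} → Ordinal.{0}) (η : Ordinal.{0})
    (A : Set Ordinal.{0}) : Prop :=
  (∀ ζ < η, e ζ ∈ A) ∧
  (∀ ζ ξ : Ordinal.{0}, ζ < ξ → ξ < η → e ζ < e ξ) ∧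
  (∀ a ∈ A, ∃ ζ < η, e ζ = a)

/-- The tail cone Halpern–Läuchli theorem `HL^tc(d,<κ,κ)`. -/
def HLtc (d : ℕ) (κ : Cardinal.{0}) : Prop :=
  ∀ T : Fin d → Set (SeqNode κ), (∀ i, IsRegularTree κ (T i)) →
    ∀ σ : Ordinal.{0} → Cardinal.{0}, (∀ ζ < κ.ord, 0 < σ ζ ∧ σ ζ < κ) →
      ∀ c : Ordinal.{0} → (Fin d → SeqNode κ) → Ordinal.{0},
        (∀ ζ < κ.ord, ∀ x ∈ LevelProd T, c ζ x < (σ ζ).ord) →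
        ∃ T' : Fin d → Set (SeqNode κ), ∃ A : Set Ordinal.{0},
          ∃ e : Ordinal.{0} → Ordinal.{0},
            (∀ i, IsStrongSubtree κ (T' i) (T i) A) ∧
            IsIncreasingEnum e κ.ord A ∧
            ∀ ζ ξ : Ordinal.{0}, ζ ≤ ξ → ξ < κ.ord →
              ∀ t : Fin d → SeqNode κ, (∀ i, t i ∈ SeqLevel (T' i) (e ξ)) →
                c ζ t = c ζ (fun i => (t i).restrict (e ζ))

/-- The modified tail cone Halpern–Läuchli theorem. -/
def HLtcMod (d : ℕ) (κ : Cardinal.{0}) : Prop :=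
  ∀ T : Fin d → Set (SeqNode κ), (∀ i, IsRegularTree κ (T i)) →
    ∀ σ : Ordinal.{0} → Cardinal.{0}, (∀ ζ < κ.ord, 0 < σ ζ ∧ σ ζ < κ) →
      ∀ c : Ordinal.{0} → (Fin d → SeqNode κ) → Ordinal.{0},
        (∀ ζ < κ.ord, ∀ x ∈ LevelProd T, c ζ x < (σ ζ).ord) →
        ∃ T' : Fin d → Set (SeqNode κ), ∃ A : Set Ordinal.{0},
          ∃ e : Ordinal.{0} → Ordinal.{0},
            (∀ i, IsStrongSubtree κ (T' i) (T i) A) ∧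
            IsIncreasingEnum e κ.ord A ∧
            ∃ μ : Ordinal.{0} → Ordinal.{0},
              (∀ γ < κ.ord, γ ≤ μ γ ∧ μ γ < κ.ord) ∧
              ∀ ζ γ : Ordinal.{0}, ζ ≤ γ → γ < κ.ord →
                ∀ t : Fin d → SeqNode κ, (∀ i, t i ∈ SeqLevel (T' i) (e γ)) →
                  c (μ ζ) t = c (μ ζ) (fun i => (t i).restrict (e ζ))

/-- `κ` is strongly inaccessible: uncountable, regular, and a strong limit. -/
def StronglyInaccessible (κ : Cardinal.{0}) : Prop :=
  ℵ₀ < κ ∧ κ.IsRegular ∧ ∀ lam : Cardinal.{0}, lam < κ → (2 : Cardinal.{0}) ^ lam < κ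

/-- `C` is a club (closed unbounded) subset of the ordinals below `η`. -/
def IsClubIn (C : Set Ordinal.{0}) (η : Ordinal.{0}) : Prop :=
  C ⊆ Set.Iio η ∧ (∀ β < η, ∃ γ ∈ C, β ≤ γ) ∧
    ∀ s ⊆ C, s.Nonempty → sSup s < η → sSup s ∈ C

/-- `S` is a stationary subset of the ordinals below `η`. -/
def IsStationaryIn (S : Set Ordinal.{0}) (η : Ordinal.{0}) : Prop :=
  ∀ C : Set Ordinal.{0}, IsClubIn C η → (S ∩ C).Nonempty

/-- `U` is an ultrafilter on the ordinals below `η`. -/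
def IsUltrafilterOn (U : Set (Set Ordinal.{0})) (η : Ordinal.{0}) : Prop :=
  (∀ A ∈ U, A ⊆ Set.Iio η) ∧ Set.Iio η ∈ U ∧ (∅ : Set Ordinal.{0}) ∉ U ∧
  (∀ A ∈ U, ∀ B : Set Ordinal.{0}, A ⊆ B → B ⊆ Set.Iio η → B ∈ U) ∧
  (∀ A ∈ U, ∀ B ∈ U, A ∩ B ∈ U) ∧
  (∀ A : Set Ordinal.{0}, A ⊆ Set.Iio η → (A ∈ U ∨ Set.Iio η \ A ∈ U))

/-- `U` is `κ`-complete: closed under intersections of fewer than `κ` of its members. -/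
def IsKappaComplete (U : Set (Set Ordinal.{0})) (κ : Cardinal.{0}) : Prop :=
  ∀ s : Set (Set Ordinal.{0}), s ⊆ U → s.Nonempty →
    Cardinal.mk ↥s < Cardinal.lift.{1} κ → ⋂₀ s ∈ U

/-- `U` is nonprincipal. -/
def IsNonprincipal (U : Set (Set Ordinal.{0})) : Prop :=
  ∀ β : Ordinal.{0}, ({β} : Set Ordinal.{0}) ∉ U

/-- `U` is a normal ultrafilter on `κ`: a nonprincipal `κ`-complete ultrafilter closed
under diagonal intersections. -/
def IsNormalUltrafilterOn (U : Set (Set Ordinal.{0})) (κ : Cardinal.{0}) : Prop :=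
  IsUltrafilterOn U κ.ord ∧ IsKappaComplete U κ ∧ IsNonprincipal U ∧
    ∀ A : Ordinal.{0} → Set Ordinal.{0}, (∀ α < κ.ord, A α ∈ U) →
      {β : Ordinal.{0} | β < κ.ord ∧ ∀ α < β, β ∈ A α} ∈ U

/-- `κ` is a measurable cardinal. -/
def IsMeasurableCard (κ : Cardinal.{0}) : Prop :=
  ℵ₀ < κ ∧ ∃ U : Set (Set Ordinal.{0}),
    IsUltrafilterOn U κ.ord ∧ IsKappaComplete U κ ∧ IsNonprincipal U

/-- The set of (ordinals which are) infinite cardinals `α < κ` with `σ < α` at which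
`SDHL(d,σ,α)` holds, viewed as a set of ordinals below `κ`. -/
def SDHLset (d : ℕ) (σ κ : Cardinal.{0}) : Set Ordinal.{0} :=
  {β : Ordinal.{0} | β < κ.ord ∧ ℵ₀ ≤ β.card ∧ β.card.ord = β ∧ σ < β.card ∧
    SDHL d σ β.card}

namespace SeqNode

theorem ext' {κ : Cardinal.{0}} {s t : SeqNode κ} (h1 : s.len = t.len)
    (h2 : ∀ β, s.val β = t.val β) : s = t := by
  cases s; cases t
  simp only at h1 h2
  subst h1
  have := funext h2
  subst this
  rfl

theorem Init.refl' {κ : Cardinal.{0}} (s : SeqNode κ) : s.Init s := ⟨le_rfl, fun _ _ => rfl⟩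

theorem val_eq_of_comp {κ : Cardinal.{0}} {s t : SeqNode κ} (h : s.Init t ∨ t.Init s)
    {β : Ordinal} (hs : β < s.len) (ht : β < t.len) : s.val β = t.val β := by
  rcases h with h | h
  · exact h.2 β hs
  · exact (h.2 β ht).symm

end SeqNode

noncomputable def mkNode (κ : Cardinal.{0}) (α : Ordinal.{0}) (hα : α < κ.ord)
    (v : Ordinal.{0} → Ordinal.{0}) (hv : ∀ β < α, v β < κ.ord) : SeqNode κ where
  len := α
  len_lt := hα
  val := fun β => if β < α then v β else 0
  val_lt := fun β hβ => by
    rw [if_pos hβ]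
    exact hv β hβ
  val_eq_zero := fun β hβ => by
    rw [if_neg (not_lt.mpr hβ)]

@[simp] theorem mkNode_len (κ : Cardinal.{0}) (α hα v hv) : (mkNode κ α hα v hv).len = α := rfl

theorem mkNode_val (κ : Cardinal.{0}) (α hα v hv) (β : Ordinal.{0}) :
    (mkNode κ α hα v hv).val β = if β < α then v β else 0 := rfl


/-- If κ is an infinite cardinal with `2^λ < κ` for all cardinals
`λ < cf(κ)`, then there exists a regular κ-tree. -/
theorem exists_regular_tree (κ : Cardinal.{0}) (hκ : ℵ₀ ≤ κ)
    (h : ∀ lam : Cardinal.{0}, lam < Ordinal.cof κ.ord → (2 : Cardinal.{0}) ^ lam < κ) :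
    ∃ T : Set (SeqNode κ), IsRegularTree κ T := by
  classical
  obtain ⟨f, hf⟩ := Ordinal.exists_fundamental_sequence κ.ord
  have hω : Ordinal.omega0 ≤ κ.ord := by
    rw [← Cardinal.ord_aleph0]; exact Cardinal.ord_le_ord.mpr hκ
  have h0 : (0 : Ordinal) < κ.ord := lt_of_lt_of_le Ordinal.omega0_pos hω
  have h1lt : (1 : Ordinal) < κ.ord := lt_of_lt_of_le Ordinal.one_lt_omega0 hω
  have hlim : Order.IsSuccLimit κ.ord := Cardinal.isSuccLimit_ord hκ
  have flt : ∀ ζ (hζ : ζ < κ.ord.cof.ord), f ζ hζ < κ.ord := by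
    intro ζ hζ
    have := Ordinal.lt_blsub f ζ hζ
    rwa [hf.blsub_eq] at this
  have hcof : ∀ γ < κ.ord, ∃ ζ, ∃ hζ : ζ < κ.ord.cof.ord, γ ≤ f ζ hζ := by
    intro γ hγ
    have : γ < Ordinal.blsub κ.ord.cof.ord f := by
      rw [hf.blsub_eq]; exact hγ
    exact Ordinal.lt_blsub_iff.mp this
  set InA : Ordinal.{0} → Prop := fun β => ∃ ζ, ∃ hζ : ζ < κ.ord.cof.ord, f ζ hζ = β with hInA
  set T : Set (SeqNode κ) :=
    {t | (∀ β, t.val β ≤ 1) ∧ ∀ β, ¬ InA β → t.val β = 0} with hT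
  have memT : ∀ t : SeqNode κ,
      t ∈ T ↔ (∀ β, t.val β ≤ 1) ∧ ∀ β, ¬ InA β → t.val β = 0 := fun t => Iff.rfl
  refine ⟨T, ?_, ?_, ?_, ?_, ?_, ?_⟩
  · -- IsSeqTree
    intro t ht s hs
    rw [memT] at ht ⊢
    constructor
    · intro β
      by_cases hβ : β < s.len
      · rw [hs.2 β hβ]; exact ht.1 β
      · rw [s.val_eq_zero β (not_lt.mp hβ)]; exact zero_le_one
    · intro β hβA
      by_cases hβ : β < s.len
      · rw [hs.2 β hβ]; exact ht.2 β hβA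
      · exact s.val_eq_zero β (not_lt.mp hβ)
  · exact fun t _ => t.len_lt
  · -- levels nonempty
    intro α hα
    refine ⟨mkNode κ α hα (fun _ => 0) (fun β _ => h0), ?_, rfl⟩
    rw [memT]
    constructor
    · intro β; rw [mkNode_val]; split <;> exact zero_le_one
    · intro β _; rw [mkNode_val]; split <;> rfl
  · -- level cardinality
    intro α hα
    obtain ⟨ζ₀, hζ₀, hαζ⟩ := hcof α hα
    rw [Cardinal.card_ord]
    set S : Set Ordinal.{0} := {β | β < α ∧ InA β} with hS
    have hΦ : Function.Injective (fun t : ↥(SeqLevel T α) =>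
        ({x | (t : SeqNode κ).val x.1 = 1} : Set ↥S)) := by
      intro t t' htt
      simp only at htt
      have hlen : (t : SeqNode κ).len = (t' : SeqNode κ).len := by
        rw [t.2.2, t'.2.2]
      refine Subtype.ext (SeqNode.ext' hlen ?_)
      intro β
      by_cases hβα : β < α
      · by_cases hβA : InA β
        · have hx : β ∈ S := ⟨hβα, hβA⟩
          have h1 : (t : SeqNode κ).val β = 1 ↔ (t' : SeqNode κ).val β = 1 := by
            constructor
            · intro hh
              have h2 : (⟨β, hx⟩ : ↥S) ∈ {x : ↥S | (t : SeqNode κ).val x.1 = 1} := hh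
              rw [htt] at h2; exact h2
            · intro hh
              have h2 : (⟨β, hx⟩ : ↥S) ∈ {x : ↥S | (t' : SeqNode κ).val x.1 = 1} := hh
              rw [← htt] at h2; exact h2
          have ht1 := ((memT _).mp t.2.1).1 β
          have ht'1 := ((memT _).mp t'.2.1).1 β
          rcases Ordinal.le_one_iff.mp ht1 with e | e <;>
            rcases Ordinal.le_one_iff.mp ht'1 with e' | e' <;> simp_all
        · rw [((memT _).mp t.2.1).2 β hβA, ((memT _).mp t'.2.1).2 β hβA]
      · rw [(t : SeqNode κ).val_eq_zero β (t.2.2.le.trans (not_lt.mp hβα)),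
          (t' : SeqNode κ).val_eq_zero β (t'.2.2.le.trans (not_lt.mp hβα))]
    have key : ∀ x : ↥S, ∃ ξ : ↥(Iio ζ₀), f ξ.1 (ξ.2.trans hζ₀) = x.1 := by
      intro x
      obtain ⟨hxα, ξ, hξ, hfx⟩ := x.2
      have hξζ₀ : ξ < ζ₀ := by
        by_contra hcon
        have hmono := hf.monotone hζ₀ hξ (not_lt.mp hcon)
        rw [hfx] at hmono
        exact absurd (hαζ.trans hmono) (not_le.mpr hxα)
      exact ⟨⟨ξ, hξζ₀⟩, hfx⟩
    have hψ : Cardinal.mk ↥S ≤ Cardinal.lift.{1} ζ₀.card := by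
      rw [← Ordinal.mk_Iio_ordinal]
      refine Cardinal.mk_le_of_injective (f := fun x => Classical.choose (key x)) ?_
      intro x y hxy
      simp only at hxy
      have hx := Classical.choose_spec (key x)
      have hy := Classical.choose_spec (key y)
      rw [hxy] at hx
      exact Subtype.ext (hx.symm.trans hy)
    calc Cardinal.mk ↥(SeqLevel T α) ≤ Cardinal.mk (Set ↥S) :=
          Cardinal.mk_le_of_injective hΦ
      _ = 2 ^ Cardinal.mk ↥S := Cardinal.mk_set
      _ ≤ 2 ^ Cardinal.lift.{1} ζ₀.card :=
          Cardinal.power_le_power_left two_ne_zero hψ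
      _ = Cardinal.lift.{1} (2 ^ ζ₀.card) := by
          rw [Cardinal.lift_power, Cardinal.lift_two]
      _ < Cardinal.lift.{1} κ :=
          Cardinal.lift_lt.mpr (h ζ₀.card (Cardinal.lt_ord.mp hζ₀))
  · -- maximal branches
    rintro b ⟨⟨hbT, hbcomp⟩, hbmax⟩ α hα
    by_contra hno
    push_neg at hno
    by_cases hex : ∃ s ∈ b, α < s.len
    · obtain ⟨s, hsb, hαs⟩ := hex
      set u := s.restrict α with hu
      have hulen : u.len = α := min_eq_left hαs.le
      have huval : ∀ β, u.val β = if β < α then s.val β else 0 := by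
        intro β
        show (if β < min α s.len then s.val β else 0) = _
        rw [min_eq_left hαs.le]
      have hsT := (memT s).mp (hbT hsb)
      have huT : u ∈ T := by
        rw [memT]
        constructor
        · intro β; rw [huval]; split
          · exact hsT.1 β
          · exact zero_le_one
        · intro β hβA; rw [huval]; split
          · exact hsT.2 β hβA
          · rfl
      have hcomp' : ∀ t ∈ b, t.Init u ∨ u.Init t := by
        intro t htb
        rcases hbcomp t htb s hsb with hts | hst
        · rcases le_or_gt t.len α with hle | hlt
          · left
            refine ⟨by rw [hulen]; exact hle, fun β hβ => ?_⟩
            rw [huval, if_pos (lt_of_lt_of_le hβ hle)]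
            exact hts.2 β hβ
          · right
            refine ⟨by rw [hulen]; exact hlt.le, fun β hβ => ?_⟩
            rw [hulen] at hβ
            rw [huval, if_pos hβ]
            exact (hts.2 β (hβ.trans hlt)).symm
        · right
          refine ⟨by rw [hulen]; exact hαs.le.trans hst.1, fun β hβ => ?_⟩
          rw [hulen] at hβ
          rw [huval, if_pos hβ]
          exact hst.2 β (hβ.trans hαs)
      have hub : u ∈ b := by
        have heq : b ∪ {u} = b := by
          apply hbmax
          · constructor
            · intro x hx
              rcases hx with hx | hx
              · exact hbT hx
              · rw [mem_singleton_iff] at hx; rw [hx]; exact huT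
            · intro x hx y hy
              rcases hx with hx | hx <;> rcases hy with hy | hy
              · exact hbcomp x hx y hy
              · rw [mem_singleton_iff] at hy; subst hy
                exact hcomp' x hx
              · rw [mem_singleton_iff] at hx; subst hx
                exact (hcomp' y hy).symm
              · rw [mem_singleton_iff] at hx hy; subst hx; subst hy
                exact Or.inl (SeqNode.Init.refl' _)
          · exact subset_union_left
        rw [← heq]; exact mem_union_right _ rfl
      exact hno u hub hulen
    · push_neg at hex
      have hltα : ∀ s ∈ b, s.len < α := fun s hs => lt_of_le_of_ne (hex s hs) (hno s hs)
      set v : Ordinal.{0} → Ordinal.{0} := fun β =>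
        if hh : ∃ s, s ∈ b ∧ β < s.len then (Classical.choose hh).val β else 0 with hv
      have hvs : ∀ s ∈ b, ∀ β, β < s.len → v β = s.val β := by
        intro s hsb β hβ
        have hh : ∃ s, s ∈ b ∧ β < s.len := ⟨s, hsb, hβ⟩
        have hspec := Classical.choose_spec hh
        rw [hv]; dsimp only; rw [dif_pos hh]
        exact SeqNode.val_eq_of_comp (hbcomp _ hspec.1 s hsb) hspec.2 hβ
      have hvlt : ∀ β, β < α → v β < κ.ord := by
        intro β _
        rw [hv]; dsimp only
        rcases em (∃ s, s ∈ b ∧ β < s.len) with hh | hh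
        · rw [dif_pos hh]
          exact (Classical.choose hh).val_lt β (Classical.choose_spec hh).2
        · rw [dif_neg hh]; exact h0
      have hvle : ∀ β, v β ≤ 1 := by
        intro β
        rw [hv]; dsimp only
        rcases em (∃ s, s ∈ b ∧ β < s.len) with hh | hh
        · rw [dif_pos hh]
          exact ((memT _).mp (hbT (Classical.choose_spec hh).1)).1 β
        · rw [dif_neg hh]; exact zero_le_one
      have hvA : ∀ β, ¬ InA β → v β = 0 := by
        intro β hβA
        rw [hv]; dsimp only
        rcases em (∃ s, s ∈ b ∧ β < s.len) with hh | hh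
        · rw [dif_pos hh]
          exact ((memT _).mp (hbT (Classical.choose_spec hh).1)).2 β hβA
        · rw [dif_neg hh]
      set u := mkNode κ α hα v hvlt with hu
      have hulen : u.len = α := rfl
      have huT : u ∈ T := by
        rw [memT]
        constructor
        · intro β
          rw [hu, mkNode_val]
          split
          · exact hvle β
          · exact zero_le_one
        · intro β hβA
          rw [hu, mkNode_val]
          split
          · exact hvA β hβA
          · rfl
      have hcomp' : ∀ t ∈ b, t.Init u := by
        intro t htb
        refine ⟨by rw [hulen]; exact (hltα t htb).le, fun β hβ => ?_⟩
        rw [hu, mkNode_val, if_pos (hβ.trans (hltα t htb)), hvs t htb β hβ]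
      have hub : u ∈ b := by
        have heq : b ∪ {u} = b := by
          apply hbmax
          · constructor
            · intro x hx
              rcases hx with hx | hx
              · exact hbT hx
              · rw [mem_singleton_iff] at hx; rw [hx]; exact huT
            · intro x hx y hy
              rcases hx with hx | hx <;> rcases hy with hy | hy
              · exact hbcomp x hx y hy
              · rw [mem_singleton_iff] at hy; subst hy
                exact Or.inl (hcomp' x hx)
              · rw [mem_singleton_iff] at hx; subst hx
                exact Or.inr (hcomp' y hy)
              · rw [mem_singleton_iff] at hx hy; subst hx; subst hy
                exact Or.inl (SeqNode.Init.refl' _)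
          · exact subset_union_left
        rw [← heq]; exact mem_union_right _ rfl
      exact hno u hub hulen
  · -- perfect
    intro t ht
    rw [memT] at ht
    obtain ⟨ζ, hζ, hγζ⟩ := hcof t.len t.len_lt
    set a := f ζ hζ with ha_def
    have ha : a < κ.ord := flt ζ hζ
    have haA : InA a := ⟨ζ, hζ, rfl⟩
    have ha1 : a + 1 < κ.ord := by
      rw [Ordinal.add_one_eq_succ]; exact hlim.succ_lt ha
    have haa1 : a < a + 1 := by
      rw [Ordinal.add_one_eq_succ]; exact Order.lt_succ a
    have mkS : ∀ ε : Ordinal.{0}, ε < κ.ord → ε ≤ 1 →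
        ∃ s : SeqNode κ, s ∈ T ∧ t.Init s ∧ s.len = a + 1 ∧
          (∀ β < t.len, s.val β = t.val β) ∧ s.val a = ε := by
      intro ε hεκ hε1
      refine ⟨mkNode κ (a+1) ha1
        (fun β => if β < t.len then t.val β else if β = a then ε else 0) ?_, ?_, ?_, rfl, ?_, ?_⟩
      · intro β hβ
        split
        · exact t.val_lt β ‹_›
        · split
          · exact hεκ
          · exact h0
      · rw [memT]
        constructor
        · intro β
          rw [mkNode_val]
          split
          · split
            · exact ht.1 β
            · split
              · exact hε1
              · exact zero_le_one
          · exact zero_le_one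
        · intro β hβA
          rw [mkNode_val]
          split
          · split
            · exact ht.2 β hβA
            · split
              · exact absurd (‹β = a› ▸ haA) hβA
              · rfl
          · rfl
      · refine ⟨hγζ.trans haa1.le, fun β hβ => ?_⟩
        rw [mkNode_val, if_pos (lt_of_lt_of_le hβ (hγζ.trans haa1.le)), if_pos hβ]
      · intro β hβ
        rw [mkNode_val, if_pos (lt_of_lt_of_le hβ (hγζ.trans haa1.le)), if_pos hβ]
      · rw [mkNode_val, if_pos haa1, if_neg (not_lt.mpr hγζ), if_pos rfl]
    obtain ⟨s0, hs0T, hs0i, hs0len, _, hs0a⟩ := mkS 0 h0 zero_le_one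
    obtain ⟨s1, hs1T, hs1i, hs1len, _, hs1a⟩ := mkS 1 h1lt le_rfl
    refine ⟨s0, hs0T, s1, hs1T, hs0i, hs1i, ?_, ?_⟩
    · intro hI
      have := hI.2 a (by rw [hs0len]; exact haa1)
      rw [hs0a, hs1a] at this
      exact zero_ne_one this
    · intro hI
      have := hI.2 a (by rw [hs1len]; exact haa1)
      rw [hs1a, hs0a] at this
      exact zero_ne_one this.symm
end

section
/- Fix 1 ≤ d < ω and a strongly inaccessible cardinal κ. Then HL^tc(d,<κ,κ) and the modified HL^tc(d,<κ,κ) are equivalent. -/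
open Cardinal Set

section Aux

open Cardinal Set

/-- Sup of the color bounds `σ ι` for `ι ≤ ζ`. -/
noncomputable def encBound (σ : Ordinal.{0} → Cardinal.{0}) (ζ : Ordinal.{0}) : Cardinal.{0} :=
  ⨆ i : (ζ + 1).ToType, σ (((Ordinal.ToType.mk (o := ζ + 1)).symm i : Set.Iio (ζ + 1)) : Ordinal)

/-- The bound for the coded coloring. -/
noncomputable def encCode (σ : Ordinal.{0} → Cardinal.{0}) (ζ : Ordinal.{0}) : Cardinal.{0} :=
  2 ^ (encBound σ ζ ⊔ (ζ + 1).card ⊔ ℵ₀)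

lemma sigma_le_encBound (σ : Ordinal.{0} → Cardinal.{0}) (ζ : Ordinal.{0})
    {ι : Ordinal.{0}} (hι : ι < ζ + 1) : σ ι ≤ encBound σ ζ := by
  have h := le_ciSup (Cardinal.bddAbove_range
    (fun i : (ζ + 1).ToType =>
      σ (((Ordinal.ToType.mk (o := ζ + 1)).symm i : Set.Iio (ζ + 1)) : Ordinal)))
    ((Ordinal.ToType.mk (o := ζ + 1)) ⟨ι, hι⟩)
  simpa [encBound] using h

lemma encCode_pos (σ : Ordinal.{0} → Cardinal.{0}) (ζ : Ordinal.{0}) : 0 < encCode σ ζ :=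
  pos_iff_ne_zero.mpr (Cardinal.power_ne_zero _ two_ne_zero)

lemma enc_exists (σ : Ordinal.{0} → Cardinal.{0}) (ζ : Ordinal.{0}) :
    Nonempty ((↥(Set.Iio (ζ + 1)) → ↥(Set.Iio ((encBound σ ζ).ord))) ↪
      ↥(Set.Iio ((encCode σ ζ).ord))) := by
  rw [← Cardinal.le_def, ← Cardinal.power_def, Ordinal.mk_Iio_ordinal,
    Ordinal.mk_Iio_ordinal, Ordinal.mk_Iio_ordinal, Cardinal.card_ord, Cardinal.card_ord,
    ← Cardinal.lift_power, Cardinal.lift_le]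
  set E : Cardinal.{0} := encBound σ ζ ⊔ (ζ + 1).card ⊔ ℵ₀ with hE
  have h1 : encBound σ ζ ≤ (2 : Cardinal.{0}) ^ E :=
    le_trans (le_trans le_sup_left le_sup_left) (Cardinal.cantor E).le
  calc encBound σ ζ ^ (ζ + 1).card ≤ ((2 : Cardinal.{0}) ^ E) ^ (ζ + 1).card :=
        Cardinal.power_le_power_right h1
    _ = (2 : Cardinal.{0}) ^ (E * (ζ + 1).card) := Cardinal.power_mul.symm
    _ ≤ (2 : Cardinal.{0}) ^ E := by
        apply Cardinal.power_le_power_left two_ne_zero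
        calc E * (ζ + 1).card ≤ E * E :=
              mul_le_mul_right (le_trans le_sup_right le_sup_left) E
          _ = E := Cardinal.mul_eq_self le_sup_right

/-- A fixed injection coding sequences of colors. -/
noncomputable def encFun (σ : Ordinal.{0} → Cardinal.{0}) (ζ : Ordinal.{0}) :
    (↥(Set.Iio (ζ + 1)) → ↥(Set.Iio ((encBound σ ζ).ord))) ↪
      ↥(Set.Iio ((encCode σ ζ).ord)) :=
  (enc_exists σ ζ).some

open Classical in
/-- The coded coloring. -/
noncomputable def codeCol {X : Type*} (σ : Ordinal.{0} → Cardinal.{0})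
    (c : Ordinal.{0} → X → Ordinal.{0}) (ζ : Ordinal.{0}) (x : X) : Ordinal.{0} :=
  if h : ∀ ι : ↥(Set.Iio (ζ + 1)), c ι x < (encBound σ ζ).ord
  then ((encFun σ ζ) (fun ι => ⟨c ι x, h ι⟩) : Ordinal)
  else 0

lemma codeCol_lt {X : Type*} (σ : Ordinal.{0} → Cardinal.{0})
    (c : Ordinal.{0} → X → Ordinal.{0}) (ζ : Ordinal.{0}) (x : X) :
    codeCol σ c ζ x < (encCode σ ζ).ord := by
  have hpos : (0 : Ordinal.{0}) < (encCode σ ζ).ord := by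
    rw [Cardinal.lt_ord, Ordinal.card_zero]
    exact encCode_pos σ ζ
  unfold codeCol
  split
  · exact Subtype.mem _
  · exact hpos

lemma codeCol_inj {X : Type*} (σ : Ordinal.{0} → Cardinal.{0})
    (c : Ordinal.{0} → X → Ordinal.{0}) (ζ : Ordinal.{0}) (x y : X)
    (hx : ∀ ι : ↥(Set.Iio (ζ + 1)), c ι x < (encBound σ ζ).ord)
    (hy : ∀ ι : ↥(Set.Iio (ζ + 1)), c ι y < (encBound σ ζ).ord)
    (h : codeCol σ c ζ x = codeCol σ c ζ y) :
    ∀ ι : Ordinal.{0}, ι < ζ + 1 → c ι x = c ι y := by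
  intro ι hι
  rw [codeCol, codeCol, dif_pos hx, dif_pos hy] at h
  have h2 := (encFun σ ζ).injective (Subtype.coe_injective h)
  have h3 := congrFun h2 ⟨ι, hι⟩
  simpa using congrArg Subtype.val h3

lemma restrict_init {κ : Cardinal.{0}} (t : SeqNode κ) (β : Ordinal.{0}) :
    (t.restrict β).Init t := by
  refine ⟨min_le_right _ _, fun γ hγ => ?_⟩
  simp only [SeqNode.restrict] at hγ ⊢
  rw [if_pos hγ]

end Aux

/-- For strongly inaccessible κ, the tail cone Halpern–Läuchli theorem
and its modified version are equivalent. -/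
theorem hltc_iff_hltcMod (d : ℕ) (hd : 1 ≤ d) (κ : Cardinal.{0})
    (hκ : StronglyInaccessible κ) :
    HLtc d κ ↔ HLtcMod d κ := by
  constructor
  · -- HLtc → HLtcMod : take μ = id
    intro h T hT σ hσ c hc
    obtain ⟨T', A, e, h1, h2, h3⟩ := h T hT σ hσ c hc
    exact ⟨T', A, e, h1, h2, fun γ => γ, fun γ hγ => ⟨le_refl γ, hγ⟩,
      fun ζ γ hζγ hγ t ht => h3 ζ γ hζγ hγ t ht⟩
  · -- HLtcMod → HLtc : code all colors below ζ into one color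
    intro h T hT σ hσ c hc
    have hκord : Order.IsSuccLimit κ.ord := Cardinal.isSuccLimit_ord hκ.1.le
    -- the coded coloring bounds are below κ
    have hσ' : ∀ ζ < κ.ord, 0 < encCode σ ζ ∧ encCode σ ζ < κ := by
      intro ζ hζ
      refine ⟨encCode_pos σ ζ, ?_⟩
      have hζ1 : ζ + 1 < κ.ord := hκord.add_one_lt hζ
      have hcard : (ζ + 1).card < κ := Cardinal.lt_ord.mp hζ1
      have hΛ : encBound σ ζ < κ := by
        apply Cardinal.iSup_lt_of_isRegular hκ.2.1
        · rw [Cardinal.mk_toType]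
          exact hcard
        · intro i
          have hmem := ((Ordinal.ToType.mk (o := ζ + 1)).symm i).2
          have : (((Ordinal.ToType.mk (o := ζ + 1)).symm i : Set.Iio (ζ + 1)) : Ordinal)
              < κ.ord := lt_trans hmem hζ1
          exact (hσ _ this).2
      have hexp : encBound σ ζ ⊔ (ζ + 1).card ⊔ ℵ₀ < κ :=
        sup_lt_iff.mpr ⟨sup_lt_iff.mpr ⟨hΛ, hcard⟩, hκ.1⟩
      exact hκ.2.2 _ hexp
    -- for products in T, colors are within the sup bound
    have hcond : ∀ ζ' < κ.ord, ∀ x ∈ LevelProd T,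
        ∀ ι : ↥(Set.Iio (ζ' + 1)), c ι x < (encBound σ ζ').ord := by
      intro ζ' hζ' x hx ι
      obtain ⟨ι, hι2⟩ := ι
      rw [Set.mem_Iio] at hι2
      have hι : ι < κ.ord := by
        have hle : ι ≤ ζ' := by
          rwa [Ordinal.add_one_eq_succ, Order.lt_succ_iff] at hι2
        exact lt_of_le_of_lt hle hζ'
      have h1 := hc ι hι x hx
      have h2 : ((σ ι).ord : Ordinal) ≤ (encBound σ ζ').ord :=
        Cardinal.ord_le_ord.mpr (sigma_le_encBound σ ζ' hι2)
      exact lt_of_lt_of_le h1 h2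
    have hc' : ∀ ζ < κ.ord, ∀ x ∈ LevelProd T, codeCol σ c ζ x < (encCode σ ζ).ord :=
      fun ζ _ x _ => codeCol_lt σ c ζ x
    obtain ⟨T', A, e, h1, h2, μ, hμ, h3⟩ := h T hT (encCode σ) hσ' (codeCol σ c) hc'
    refine ⟨T', A, e, h1, h2, ?_⟩
    intro ζ ξ hζξ hξ t ht
    have hζ : ζ < κ.ord := lt_of_le_of_lt hζξ hξ
    obtain ⟨hζμ, hμκ⟩ := hμ ζ hζ
    -- t lies in the level product of T at level e ξ
    have htT : ∀ i, t i ∈ T i ∧ (t i).len = e ξ :=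
      fun i => ⟨(h1 i).1 (ht i).1, (ht i).2⟩
    have htLP : t ∈ LevelProd T := ⟨e ξ, htT⟩
    -- e ζ ≤ e ξ
    have heζξ : e ζ ≤ e ξ := by
      rcases eq_or_lt_of_le hζξ with heq | hlt
      · rw [heq]
      · exact (h2.2.1 ζ ξ hlt hξ).le
    -- the restricted tuple lies in the level product of T at level e ζ
    have hrlen : ∀ i, ((t i).restrict (e ζ)).len = e ζ := by
      intro i
      show min (e ζ) (t i).len = e ζ
      rw [(htT i).2]
      exact min_eq_left heζξ
    have hrT : ∀ i, (t i).restrict (e ζ) ∈ T i :=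
      fun i => (hT i).1 (t i) (htT i).1 _ (restrict_init (t i) (e ζ))
    have hrLP : (fun i => (t i).restrict (e ζ)) ∈ LevelProd T :=
      ⟨e ζ, fun i => ⟨hrT i, hrlen i⟩⟩
    -- apply homogeneity for the coded coloring at μ ζ, then decode
    have heq := h3 ζ ξ hζξ hξ t ht
    exact codeCol_inj σ c (μ ζ) t (fun i => (t i).restrict (e ζ))
      (hcond (μ ζ) hμκ t htLP) (hcond (μ ζ) hμκ _ hrLP) heq ζ
      (by rw [Ordinal.add_one_eq_succ, Order.lt_succ_iff]; exact hζμ)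
end
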